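/- Heine's transformation: for complex q with |q| < 1 and complex α, β, γ, τ with |τ| < 1, |β| < 1, and γ not of the form q^{-k}, one has ∑_{n=0}^∞ (α;q)_n(β;q)_n / ((γ;q)_n(q;q)_n) τ^n = ((β;q)_∞ (ατ;q)_∞ / ((γ;q)_∞ (τ;q)_∞)) · ∑_{n=0}^∞ (γ/β;q)_n(τ;q)_n / ((ατ;q)_n(q;q)_n) β^n. -/

import Mathlib

open Finset Filter Topology

namespace Heine

noncomputable def P (q x : ℂ) (n : ℕ) : ℂ := ∏ k ∈ Finset.range n, (1 - x * q ^ k)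
noncomputable def Pinf (q x : ℂ) : ℂ := ∏' k : ℕ, (1 - x * q ^ k)
noncomputable def c (q x : ℂ) (n : ℕ) : ℂ := P q x n / P q q n
noncomputable def F (q x z : ℂ) : ℂ := ∑' n : ℕ, c q x n * z ^ n

variable {q : ℂ} (hq : ‖q‖ < 1)
include hq

lemma norm_xqk (x : ℂ) (hx : ‖x‖ < 1) (k : ℕ) : ‖x * q ^ k‖ < 1 := by
  calc ‖x * q ^ k‖ = ‖x‖ * ‖q‖ ^ k := by simp [norm_mul, norm_pow]
    _ ≤ ‖x‖ * 1 := mul_le_mul_of_nonneg_left (pow_le_one₀ (norm_nonneg q) hq.le) (norm_nonneg x)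
    _ < 1 := by simpa using hx

lemma fact_ne (x : ℂ) (hx : ‖x‖ < 1) (k : ℕ) : 1 - x * q ^ k ≠ 0 := by
  intro h
  have h1 : x * q ^ k = 1 := by linear_combination -h
  have h2 := norm_xqk hq x hx k
  rw [h1, norm_one] at h2
  exact lt_irrefl _ h2

lemma log_summable (x : ℂ) : Summable (fun k : ℕ => Complex.log (1 - x * q ^ k)) := by
  apply Summable.of_norm_bounded_eventually_nat (g := fun k => (3/2 : ℝ) * (‖x‖ * ‖q‖ ^ k))
  · exact ((summable_geometric_of_lt_one (norm_nonneg q) hq).mul_left _).mul_left _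
  · have h0 : Tendsto (fun k : ℕ => ‖x‖ * ‖q‖ ^ k) atTop (𝓝 0) := by
      simpa using (tendsto_pow_atTop_nhds_zero_of_lt_one (norm_nonneg q) hq).const_mul ‖x‖
    filter_upwards [h0.eventually_le_const (by norm_num : (0:ℝ) < 1/2)] with k hk
    have h1 : ‖-(x * q ^ k)‖ ≤ 1/2 := by
      rw [norm_neg, norm_mul, norm_pow]; exact hk
    have := Complex.norm_log_one_add_half_le_self h1
    rw [show (1 : ℂ) + -(x * q ^ k) = 1 - x * q ^ k by ring] at this
    simpa [norm_mul, norm_pow] using this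

lemma multipliable (x : ℂ) (hx : ∀ k : ℕ, 1 - x * q ^ k ≠ 0) :
    Multipliable (fun k : ℕ => 1 - x * q ^ k) :=
  Complex.multipliable_of_summable_log (log_summable hq x)

lemma Pinf_ne_zero (x : ℂ) (hx : ∀ k : ℕ, 1 - x * q ^ k ≠ 0) : Pinf q x ≠ 0 := by
  have := Complex.cexp_tsum_eq_tprod (f := fun k => 1 - x * q ^ k) hx (log_summable hq x)
  rw [Pinf, ← this]
  exact Complex.exp_ne_zero _

lemma tendsto_P (x : ℂ) (hx : ∀ k : ℕ, 1 - x * q ^ k ≠ 0) :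
    Tendsto (fun n => P q x n) atTop (𝓝 (Pinf q x)) :=
  (multipliable hq x hx).hasProd.tendsto_prod_nat

lemma P_split (x : ℂ) (hx : ∀ k : ℕ, 1 - x * q ^ k ≠ 0) (n : ℕ) :
    Pinf q x = P q x n * Pinf q (x * q ^ n) := by
  have hx' : ∀ k : ℕ, 1 - x * q ^ n * q ^ k ≠ 0 := by
    intro k
    have h3 := hx (n + k)
    rw [pow_add] at h3
    intro h; apply h3; rw [← h]; ring
  have hm : Multipliable (fun k : ℕ => 1 - x * q ^ (k + n)) := by
    apply (multipliable hq (x * q ^ n) hx').congr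
    intro k
    rw [pow_add]; ring
  rw [Pinf, Pinf, ← Multipliable.prod_mul_tprod_nat_mul' (f := fun k => 1 - x * q ^ k) (k := n) hm, P]
  congr 1
  apply tprod_congr
  intro k
  rw [pow_add]
  ring


lemma P_norm_le (x : ℂ) (n : ℕ) : ‖P q x n‖ ≤ Real.exp (‖x‖ / (1 - ‖q‖)) := by
  have h1 : ‖P q x n‖ ≤ ∏ k ∈ range n, (1 + ‖x‖ * ‖q‖ ^ k) := by
    rw [P]
    refine (Finset.norm_prod_le _ _).trans ?_
    apply Finset.prod_le_prod (fun k _ => norm_nonneg _)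
    intro k _
    calc ‖1 - x * q ^ k‖ ≤ ‖(1:ℂ)‖ + ‖x * q ^ k‖ := norm_sub_le _ _
      _ = 1 + ‖x‖ * ‖q‖ ^ k := by simp [norm_mul, norm_pow]
  refine h1.trans ?_
  calc ∏ k ∈ range n, (1 + ‖x‖ * ‖q‖ ^ k) ≤ ∏ k ∈ range n, Real.exp (‖x‖ * ‖q‖ ^ k) :=
      Finset.prod_le_prod (fun k _ => by positivity) (fun k _ => by
        simpa [add_comm] using Real.add_one_le_exp (‖x‖ * ‖q‖ ^ k))
    _ = Real.exp (∑ k ∈ range n, ‖x‖ * ‖q‖ ^ k) := (Real.exp_sum _ _).symm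
    _ ≤ Real.exp (‖x‖ / (1 - ‖q‖)) := by
        apply Real.exp_le_exp.2
        rw [← Finset.mul_sum, div_eq_mul_inv]
        apply mul_le_mul_of_nonneg_left _ (norm_nonneg x)
        have hs := summable_geometric_of_lt_one (norm_nonneg q) hq
        have := Summable.sum_le_tsum (range n) (fun i _ => by positivity) hs
        rwa [tsum_geometric_of_lt_one (norm_nonneg q) hq] at this

omit hq in
lemma P_ne_zero (x : ℂ) (hx : ∀ k : ℕ, 1 - x * q ^ k ≠ 0) (n : ℕ) : P q x n ≠ 0 := by
  rw [P]
  exact Finset.prod_ne_zero_iff.2 (fun k _ => hx k)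

lemma P_lb (x : ℂ) (hx : ∀ k : ℕ, 1 - x * q ^ k ≠ 0) :
    ∃ ε : ℝ, 0 < ε ∧ ∀ n, ε ≤ ‖P q x n‖ := by
  have hP : ∀ n, 0 < ‖P q x n‖ := fun n => norm_pos_iff.2 (P_ne_zero x hx n)
  have ht : Tendsto (fun n => ‖P q x n‖) atTop (𝓝 ‖Pinf q x‖) := (tendsto_P hq x hx).norm
  have hL : 0 < ‖Pinf q x‖ := norm_pos_iff.2 (Pinf_ne_zero hq x hx)
  have hev : ∀ᶠ n in atTop, ‖Pinf q x‖ / 2 ≤ ‖P q x n‖ :=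
    ht.eventually_const_le (half_lt_self hL)
  obtain ⟨N, hN⟩ := eventually_atTop.1 hev
  refine ⟨min (‖Pinf q x‖ / 2) ((Finset.range (N + 1)).inf' ⟨0, by simp⟩
    (fun n => ‖P q x n‖)), ?_, ?_⟩
  · apply lt_min (by positivity)
    exact (Finset.lt_inf'_iff ..).2 (fun i _ => hP i)
  · intro n
    rcases le_or_gt n N with h | h
    · exact (min_le_right _ _).trans (Finset.inf'_le _ (by simp [Finset.mem_range]; omega))
    · exact (min_le_left _ _).trans (hN n h.le)

lemma c_bound (x : ℂ) : ∃ M : ℝ, 0 < M ∧ ∀ n, ‖c q x n‖ ≤ M := by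
  obtain ⟨ε, hε, hlb⟩ := P_lb hq q (fact_ne hq q hq)
  refine ⟨Real.exp (‖x‖ / (1 - ‖q‖)) / ε, by positivity, fun n => ?_⟩
  rw [c, norm_div]
  exact div_le_div₀ (by positivity) (P_norm_le hq x n) hε (hlb n)

lemma summable_c (x z : ℂ) (hz : ‖z‖ < 1) : Summable (fun n => c q x n * z ^ n) := by
  obtain ⟨M, hM0, hM⟩ := c_bound hq x
  apply Summable.of_norm_bounded (g := fun n => M * ‖z‖ ^ n)
    ((summable_geometric_of_lt_one (norm_nonneg z) hz).mul_left M)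
  intro n
  rw [norm_mul, norm_pow]
  exact mul_le_mul_of_nonneg_right (hM n) (by positivity)

omit hq in
lemma c_zero (x : ℂ) : c q x 0 = 1 := by simp [c, P]

lemma one_sub_qpow_ne (n : ℕ) : 1 - q ^ (n + 1) ≠ 0 := by
  have := fact_ne hq q hq n
  rwa [show q * q ^ n = q ^ (n + 1) by rw [pow_succ]; ring] at this

lemma c_rec (x : ℂ) (n : ℕ) :
    c q x (n + 1) * (1 - q ^ (n + 1)) = c q x n * (1 - x * q ^ n) := by
  have e1 : P q x (n + 1) = P q x n * (1 - x * q ^ n) := Finset.prod_range_succ _ _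
  have e2 : P q q (n + 1) = P q q n * (1 - q ^ (n + 1)) := by
    rw [show P q q (n+1) = P q q n * (1 - q * q ^ n) from Finset.prod_range_succ _ _]
    rw [show q * q ^ n = q ^ (n + 1) by rw [pow_succ]; ring]
  have h1 := P_ne_zero q (fact_ne hq q hq) n
  have h2 := one_sub_qpow_ne hq n
  rw [c, c, e1, e2]
  field_simp


omit hq in
lemma norm_mul_lt (z w : ℂ) (hz : ‖z‖ < 1) (hw : ‖w‖ ≤ 1) : ‖w * z‖ < 1 := by
  calc ‖w * z‖ = ‖w‖ * ‖z‖ := norm_mul _ _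
    _ ≤ 1 * ‖z‖ := mul_le_mul_of_nonneg_right hw (norm_nonneg z)
    _ = ‖z‖ := one_mul _
    _ < 1 := hz

lemma Feq (x z : ℂ) (hz : ‖z‖ < 1) :
    (1 - z) * F q x z = (1 - x * z) * F q x (q * z) := by
  have hqz : ‖q * z‖ < 1 := norm_mul_lt z q hz hq.le
  have S : Summable (fun n => c q x n * z ^ n) := summable_c hq x z hz
  have Sq : Summable (fun n => c q x n * (q * z) ^ n) := summable_c hq x (q * z) hqz
  have hG : Summable (fun n => c q x n * z ^ n - c q x n * (q * z) ^ n) := S.sub Sq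
  have h1 : F q x z - F q x (q * z) =
      ∑' n, (c q x n * z ^ n - c q x n * (q * z) ^ n) := by
    rw [Summable.tsum_sub S Sq]; rfl
  have h2 : ∑' n, (c q x n * z ^ n - c q x n * (q * z) ^ n) =
      ∑' n, (c q x (n+1) * z ^ (n+1) - c q x (n+1) * (q * z) ^ (n+1)) := by
    rw [Summable.tsum_eq_zero_add hG]
    simp
  have h3 : ∀ n : ℕ, c q x (n+1) * z ^ (n+1) - c q x (n+1) * (q * z) ^ (n+1) =
      z * (c q x n * z ^ n) - x * z * (c q x n * (q * z) ^ n) := by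
    intro n
    have hr := c_rec hq x n
    calc c q x (n+1) * z ^ (n+1) - c q x (n+1) * (q * z) ^ (n+1)
        = (c q x (n+1) * (1 - q ^ (n+1))) * z ^ (n+1) := by rw [mul_pow]; ring
      _ = (c q x n * (1 - x * q ^ n)) * z ^ (n+1) := by rw [hr]
      _ = z * (c q x n * z ^ n) - x * z * (c q x n * (q * z) ^ n) := by
          rw [mul_pow]; ring
  have h4 : ∑' n, (c q x (n+1) * z ^ (n+1) - c q x (n+1) * (q * z) ^ (n+1)) =
      z * F q x z - x * z * F q x (q * z) := by
    calc ∑' n, (c q x (n+1) * z ^ (n+1) - c q x (n+1) * (q * z) ^ (n+1))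
        = ∑' n, (z * (c q x n * z ^ n) - x * z * (c q x n * (q * z) ^ n)) :=
          tsum_congr h3
      _ = z * ∑' n, (c q x n * z ^ n) - x * z * ∑' n, (c q x n * (q * z) ^ n) := by
          rw [Summable.tsum_sub (S.mul_left z) (Sq.mul_left (x * z)), tsum_mul_left, tsum_mul_left]
      _ = z * F q x z - x * z * F q x (q * z) := rfl
  have h5 : F q x z - F q x (q * z) = z * F q x z - x * z * F q x (q * z) := by
    rw [h1, h2, h4]
  linear_combination h5

lemma Fiter (x z : ℂ) (hz : ‖z‖ < 1) (N : ℕ) :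
    F q x z * P q z N = P q (x * z) N * F q x (q ^ N * z) := by
  induction N with
  | zero => simp [P]
  | succ N ih =>
    have hz' : ‖q ^ N * z‖ < 1 :=
      norm_mul_lt z (q ^ N) hz (by rw [norm_pow]; exact pow_le_one₀ (norm_nonneg q) hq.le)
    have hfe := Feq hq x (q ^ N * z) hz'
    have e1 : P q z (N + 1) = P q z N * (1 - z * q ^ N) := Finset.prod_range_succ _ _
    have e2 : P q (x * z) (N + 1) = P q (x * z) N * (1 - x * z * q ^ N) :=
      Finset.prod_range_succ _ _
    calc F q x z * P q z (N + 1) = (F q x z * P q z N) * (1 - z * q ^ N) := by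
          rw [e1]; ring
      _ = P q (x * z) N * ((1 - q ^ N * z) * F q x (q ^ N * z)) := by
          rw [ih]; ring
      _ = P q (x * z) N * ((1 - x * (q ^ N * z)) * F q x (q * (q ^ N * z))) := by
          rw [hfe]
      _ = P q (x * z) (N + 1) * F q x (q ^ (N + 1) * z) := by
          rw [e2, show q * (q ^ N * z) = q ^ (N + 1) * z by rw [pow_succ]; ring]
          ring

lemma F_tendsto_one (x z : ℂ) (hz : ‖z‖ < 1) :
    Tendsto (fun N : ℕ => F q x (q ^ N * z)) atTop (𝓝 1) := by
  obtain ⟨M, hM0, hM⟩ := c_bound hq x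
  have key : ∀ w : ℂ, ‖w‖ ≤ 1 / 2 → ‖F q x w - 1‖ ≤ 2 * M * ‖w‖ := by
    intro w hw
    have hw1 : ‖w‖ < 1 := lt_of_le_of_lt hw (by norm_num)
    have Sw : Summable (fun n => c q x n * w ^ n) := summable_c hq x w hw1
    have hF : F q x w = 1 + ∑' n, c q x (n + 1) * w ^ (n + 1) := by
      rw [F, Summable.tsum_eq_zero_add Sw, c_zero]
      simp
    rw [hF]
    rw [show (1 : ℂ) + ∑' n, c q x (n + 1) * w ^ (n + 1) - 1
      = ∑' n, c q x (n + 1) * w ^ (n + 1) by ring]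
    have hb : ∀ n : ℕ, ‖c q x (n + 1) * w ^ (n + 1)‖ ≤ (M * ‖w‖) * (1 / 2) ^ n := by
      intro n
      rw [norm_mul, norm_pow, pow_succ]
      calc ‖c q x (n + 1)‖ * (‖w‖ ^ n * ‖w‖) ≤ M * (‖w‖ ^ n * ‖w‖) :=
            mul_le_mul_of_nonneg_right (hM _) (by positivity)
        _ ≤ M * ((1 / 2) ^ n * ‖w‖) := by
            apply mul_le_mul_of_nonneg_left _ hM0.le
            apply mul_le_mul_of_nonneg_right _ (norm_nonneg w)
            exact pow_le_pow_left₀ (norm_nonneg w) hw n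
        _ = (M * ‖w‖) * (1 / 2) ^ n := by ring
    have hgs : HasSum (fun n : ℕ => (M * ‖w‖) * (1 / 2) ^ n) ((M * ‖w‖) * 2) := by
      have := hasSum_geometric_of_lt_one (by norm_num : (0:ℝ) ≤ 1/2) (by norm_num : (1/2:ℝ) < 1)
      rw [show (1 - 1/2 : ℝ)⁻¹ = 2 by norm_num] at this
      exact this.mul_left _
    have := tsum_of_norm_bounded hgs hb
    calc ‖∑' n, c q x (n + 1) * w ^ (n + 1)‖ ≤ (M * ‖w‖) * 2 := this
      _ = 2 * M * ‖w‖ := by ring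
  have h0 : Tendsto (fun N : ℕ => q ^ N * z) atTop (𝓝 0) := by
    simpa using (tendsto_pow_atTop_nhds_zero_of_norm_lt_one hq).mul_const z
  have hnorm : Tendsto (fun N : ℕ => ‖q ^ N * z‖) atTop (𝓝 0) := by
    simpa using h0.norm
  have hev : ∀ᶠ N : ℕ in atTop, ‖F q x (q ^ N * z) - 1‖ ≤ 2 * M * ‖q ^ N * z‖ := by
    filter_upwards [hnorm.eventually_le_const (by norm_num : (0:ℝ) < 1/2)] with N hN
    exact key _ hN
  have hsq : Tendsto (fun N : ℕ => F q x (q ^ N * z) - 1) atTop (𝓝 0) := by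
    apply squeeze_zero_norm' hev
    simpa using hnorm.const_mul (2 * M)
  have := hsq.add_const 1
  simpa using this

lemma qbinom (x z : ℂ) (hz : ‖z‖ < 1) (hxz : ∀ k : ℕ, 1 - x * z * q ^ k ≠ 0) :
    F q x z * Pinf q z = Pinf q (x * z) := by
  have hz' : ∀ k : ℕ, 1 - z * q ^ k ≠ 0 := fact_ne hq z hz
  have t1 : Tendsto (fun N => F q x z * P q z N) atTop (𝓝 (F q x z * Pinf q z)) :=
    (tendsto_P hq z hz').const_mul _
  have t2 : Tendsto (fun N => P q (x * z) N * F q x (q ^ N * z)) atTop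
      (𝓝 (Pinf q (x * z) * 1)) :=
    (tendsto_P hq (x * z) hxz).mul (F_tendsto_one hq x z hz)
  have heq : (fun N => F q x z * P q z N) = (fun N => P q (x * z) N * F q x (q ^ N * z)) :=
    funext (Fiter hq x z hz)
  rw [heq] at t1
  have := tendsto_nhds_unique t1 t2
  rwa [mul_one] at this


noncomputable def A (q α g β τ : ℂ) (n m : ℕ) : ℂ :=
  (c q α n * τ ^ n) * (c q g m * (β * q ^ n) ^ m)

omit hq in
lemma A_eq (α g β τ : ℂ) (n m : ℕ) :
    A q α g β τ n m = (c q g m * β ^ m) * (c q α n * (τ * q ^ m) ^ n) := by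
  rw [A, mul_pow, mul_pow, ← pow_mul, ← pow_mul, mul_comm m n]
  ring

lemma heine_core (α β γ τ : ℂ) (hτ : ‖τ‖ < 1) (hβ : ‖β‖ < 1) (hβ0 : β ≠ 0)
    (hγ : ∀ k : ℕ, 1 - γ * q ^ k ≠ 0) (hατ : ∀ k : ℕ, 1 - α * τ * q ^ k ≠ 0) :
    ∑' n : ℕ, P q α n * P q β n / (P q γ n * P q q n) * τ ^ n
      = (Pinf q β * Pinf q (α * τ) / (Pinf q γ * Pinf q τ)) *
        ∑' m : ℕ, P q (γ / β) m * P q τ m / (P q (α * τ) m * P q q m) * β ^ m := by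
  have hβ' : ∀ k : ℕ, 1 - β * q ^ k ≠ 0 := fact_ne hq β hβ
  have hτ' : ∀ k : ℕ, 1 - τ * q ^ k ≠ 0 := fact_ne hq τ hτ
  -- shifted nonvanishing
  have hγs : ∀ n k : ℕ, 1 - γ * q ^ n * q ^ k ≠ 0 := by
    intro n k
    have h3 := hγ (n + k); rw [pow_add] at h3
    intro h; apply h3; rw [← h]; ring
  have hατs : ∀ m k : ℕ, 1 - α * τ * q ^ m * q ^ k ≠ 0 := by
    intro m k
    have h3 := hατ (m + k); rw [pow_add] at h3
    intro h; apply h3; rw [← h]; ring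
  have hβs : ∀ n k : ℕ, 1 - β * q ^ n * q ^ k ≠ 0 :=
    fun n => fact_ne hq (β * q ^ n) (norm_xqk hq β hβ n)
  have hτs : ∀ m k : ℕ, 1 - τ * q ^ m * q ^ k ≠ 0 :=
    fun m => fact_ne hq (τ * q ^ m) (norm_xqk hq τ hτ m)
  -- pointwise identity in n
  have key1 : ∀ n : ℕ, P q α n * P q β n / (P q γ n * P q q n) * τ ^ n
      = (Pinf q β / Pinf q γ) * ∑' m, A q α (γ / β) β τ n m := by
    intro n
    have hXne : Pinf q (β * q ^ n) ≠ 0 := Pinf_ne_zero hq _ (hβs n)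
    have hYne : Pinf q (γ * q ^ n) ≠ 0 := Pinf_ne_zero hq _ (hγs n)
    have e : γ / β * (β * q ^ n) = γ * q ^ n := by
      field_simp
    have hqb := qbinom hq (γ / β) (β * q ^ n) (norm_xqk hq β hβ n)
      (by rw [e]; exact hγs n)
    rw [e] at hqb
    have hF : F q (γ / β) (β * q ^ n) = Pinf q (γ * q ^ n) / Pinf q (β * q ^ n) :=
      (eq_div_iff hXne).2 hqb
    have h1 : ∑' m, A q α (γ / β) β τ n m = c q α n * τ ^ n * F q (γ / β) (β * q ^ n) := by
      simp only [A]
      rw [F, tsum_mul_left]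
    rw [h1, hF, c, P_split hq β hβ' n, P_split hq γ hγ n]
    have hkey : P q β n * Pinf q (β * q ^ n) / (P q γ n * Pinf q (γ * q ^ n)) *
        (P q α n / P q q n * τ ^ n * (Pinf q (γ * q ^ n) / Pinf q (β * q ^ n)))
        = P q α n * P q β n / (P q γ n * P q q n) * τ ^ n *
          (Pinf q (β * q ^ n) / Pinf q (β * q ^ n)) *
          (Pinf q (γ * q ^ n) / Pinf q (γ * q ^ n)) := by ring
    rw [hkey, div_self hXne, div_self hYne, mul_one, mul_one]
  -- summability of the double family
  obtain ⟨Mα, hMα0, hMα⟩ := c_bound hq α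
  obtain ⟨Mg, hMg0, hMg⟩ := c_bound hq (γ / β)
  have hgeoτ : Summable (fun n : ℕ => Mα * ‖τ‖ ^ n) :=
    (summable_geometric_of_lt_one (norm_nonneg τ) hτ).mul_left _
  have hgeoβ : Summable (fun m : ℕ => Mg * ‖β‖ ^ m) :=
    (summable_geometric_of_lt_one (norm_nonneg β) hβ).mul_left _
  have hbound : ∀ p : ℕ × ℕ,
      ‖A q α (γ / β) β τ p.1 p.2‖ ≤ (Mα * ‖τ‖ ^ p.1) * (Mg * ‖β‖ ^ p.2) := by
    rintro ⟨n, m⟩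
    rw [A]
    rw [norm_mul, norm_mul, norm_mul, norm_pow, norm_pow]
    have h1 : ‖β * q ^ n‖ ≤ ‖β‖ := by
      rw [norm_mul, norm_pow]
      calc ‖β‖ * ‖q‖ ^ n ≤ ‖β‖ * 1 :=
            mul_le_mul_of_nonneg_left (pow_le_one₀ (norm_nonneg q) hq.le) (norm_nonneg β)
        _ = ‖β‖ := mul_one _
    have h2 : ‖β * q ^ n‖ ^ m ≤ ‖β‖ ^ m := pow_le_pow_left₀ (norm_nonneg _) h1 m
    apply mul_le_mul
    · exact mul_le_mul_of_nonneg_right (hMα n) (by positivity)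
    · exact mul_le_mul (hMg m) h2 (by positivity) hMg0.le
    · positivity
    · positivity
  have hsum2 : Summable (fun p : ℕ × ℕ => (Mα * ‖τ‖ ^ p.1) * (Mg * ‖β‖ ^ p.2)) :=
    hgeoτ.mul_of_nonneg hgeoβ (fun n => by positivity) (fun m => by positivity)
  have hAsum : Summable (Function.uncurry (A q α (γ / β) β τ)) :=
    Summable.of_norm_bounded hsum2 (fun p => hbound p)
  have hA1 : ∀ n, Summable (A q α (γ / β) β τ n) := by
    intro n
    apply ((summable_c hq (γ / β) (β * q ^ n) (norm_xqk hq β hβ n)).mul_left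
      (c q α n * τ ^ n)).congr
    intro m
    rw [A]
  have hA2 : ∀ m, Summable (fun n => A q α (γ / β) β τ n m) := by
    intro m
    apply ((summable_c hq α (τ * q ^ m) (norm_xqk hq τ hτ m)).mul_left
      (c q (γ / β) m * β ^ m)).congr
    intro n
    rw [A_eq]
  -- inner sum over n, for fixed m
  have key2 : ∀ m : ℕ, ∑' n, A q α (γ / β) β τ n m
      = (c q (γ / β) m * β ^ m) * (Pinf q (α * τ * q ^ m) / Pinf q (τ * q ^ m)) := by
    intro m
    have hZne : Pinf q (τ * q ^ m) ≠ 0 := Pinf_ne_zero hq _ (hτs m)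
    have e : α * (τ * q ^ m) = α * τ * q ^ m := by ring
    have hqb := qbinom hq α (τ * q ^ m) (norm_xqk hq τ hτ m)
      (by rw [e]; exact hατs m)
    rw [e] at hqb
    have hF : F q α (τ * q ^ m) = Pinf q (α * τ * q ^ m) / Pinf q (τ * q ^ m) :=
      (eq_div_iff hZne).2 hqb
    calc ∑' n, A q α (γ / β) β τ n m
        = ∑' n, (c q (γ / β) m * β ^ m) * (c q α n * (τ * q ^ m) ^ n) :=
          tsum_congr (fun n => A_eq α (γ / β) β τ n m)
      _ = (c q (γ / β) m * β ^ m) * F q α (τ * q ^ m) := by rw [F, tsum_mul_left]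
      _ = _ := by rw [hF]
  -- pointwise identity in m
  have key3 : ∀ m : ℕ,
      (c q (γ / β) m * β ^ m) * (Pinf q (α * τ * q ^ m) / Pinf q (τ * q ^ m))
      = (Pinf q (α * τ) / Pinf q τ) *
        (P q (γ / β) m * P q τ m / (P q (α * τ) m * P q q m) * β ^ m) := by
    intro m
    have hPατ : P q (α * τ) m ≠ 0 := P_ne_zero (α * τ) hατ m
    have hPτ : P q τ m ≠ 0 := P_ne_zero τ hτ' m
    rw [c, P_split hq (α * τ) hατ m, P_split hq τ hτ' m]
    have hkey : P q (α * τ) m * Pinf q (α * τ * q ^ m) / (P q τ m * Pinf q (τ * q ^ m)) *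
        (P q (γ / β) m * P q τ m / (P q (α * τ) m * P q q m) * β ^ m)
        = P q (γ / β) m / P q q m * β ^ m *
          (Pinf q (α * τ * q ^ m) / Pinf q (τ * q ^ m)) *
          (P q (α * τ) m / P q (α * τ) m) * (P q τ m / P q τ m) := by ring
    rw [hkey, div_self hPατ, div_self hPτ, mul_one, mul_one]
  -- assemble
  calc ∑' n : ℕ, P q α n * P q β n / (P q γ n * P q q n) * τ ^ n
      = ∑' n, (Pinf q β / Pinf q γ) * ∑' m, A q α (γ / β) β τ n m := tsum_congr key1
    _ = (Pinf q β / Pinf q γ) * ∑' n, ∑' m, A q α (γ / β) β τ n m := tsum_mul_left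
    _ = (Pinf q β / Pinf q γ) * ∑' m, ∑' n, A q α (γ / β) β τ n m := by
        rw [Summable.tsum_comm' hAsum hA1 hA2]
    _ = (Pinf q β / Pinf q γ) * ((Pinf q (α * τ) / Pinf q τ) *
        ∑' m, P q (γ / β) m * P q τ m / (P q (α * τ) m * P q q m) * β ^ m) := by
        congr 1
        rw [← tsum_mul_left]
        exact tsum_congr (fun m => by rw [key2 m, key3 m])
    _ = _ := by
        rw [← mul_assoc, div_mul_div_comm]

end Heine

theorem heine_transformation (q α β γ τ : ℂ) (hq : ‖q‖ < 1) (hτ : ‖τ‖ < 1)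
    (hβ : ‖β‖ < 1) (hβ0 : β ≠ 0)
    (hγ : ∀ k : ℕ, γ * q ^ k ≠ 1) (hατ : ∀ k : ℕ, α * τ * q ^ k ≠ 1) :
    ∑' n : ℕ,
        (∏ k ∈ Finset.range n, (1 - α * q ^ k)) *
          (∏ k ∈ Finset.range n, (1 - β * q ^ k)) /
        ((∏ k ∈ Finset.range n, (1 - γ * q ^ k)) *
          (∏ k ∈ Finset.range n, (1 - q * q ^ k))) * τ ^ n =
      ((∏' k : ℕ, (1 - β * q ^ k)) * (∏' k : ℕ, (1 - α * τ * q ^ k)) /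
        ((∏' k : ℕ, (1 - γ * q ^ k)) * (∏' k : ℕ, (1 - τ * q ^ k)))) *
      ∑' n : ℕ,
        (∏ k ∈ Finset.range n, (1 - γ / β * q ^ k)) *
          (∏ k ∈ Finset.range n, (1 - τ * q ^ k)) /
        ((∏ k ∈ Finset.range n, (1 - α * τ * q ^ k)) *
          (∏ k ∈ Finset.range n, (1 - q * q ^ k))) * β ^ n := by
  have hγ' : ∀ k : ℕ, 1 - γ * q ^ k ≠ 0 := fun k => sub_ne_zero.2 (hγ k).symm
  have hατ' : ∀ k : ℕ, 1 - α * τ * q ^ k ≠ 0 := fun k => sub_ne_zero.2 (hατ k).symm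
  exact Heine.heine_core hq α β γ τ hτ hβ hβ0 hγ' hατ'
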